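/- Let (G, m_0) be a bimaze, i.e., a bipartite graph G = (V, W) with a matching m_0 onto W. For every m_0-matchable set I ⊆ V there is a set B ⊇ I and an m_0-matching from B onto all of W. -/

import Mathlib

open Set

section Bipartite

variable {V W : Type*}

/-- `m` is a matching in the bipartite graph with edge set `E ⊆ V × W`. -/
def IsBipMatching (E m : Set (V × W)) : Prop :=
  m ⊆ E ∧ ∀ p ∈ m, ∀ q ∈ m, (p.1 = q.1 ∨ p.2 = q.2) → p = q

/-- `I ⊆ V` is matchable in the bipartite graph with edge set `E`. -/
def Matchable (E : Set (V × W)) (I : Set V) : Prop :=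
  ∃ m, IsBipMatching E m ∧ Prod.fst '' m = I

/-- One step along an edge of `F` in the bipartite graph, on vertex type `V ⊕ W`. -/
def bipStep (F : Set (V × W)) : (V ⊕ W) → (V ⊕ W) → Prop := fun a b =>
  match a, b with
  | Sum.inl v, Sum.inr w => (v, w) ∈ F
  | Sum.inr w, Sum.inl v => (v, w) ∈ F
  | _, _ => False

/-- Every connected component of the bipartite graph with edge set `F` is finite. -/
def FiniteComponents (F : Set (V × W)) : Prop :=
  ∀ x : V ⊕ W, {y | Relation.ReflTransGen (bipStep F) x y}.Finite

/-- `m` is an `m0`-matching: a matching such that every component of `m0 ∪ m` is finite. -/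
def IsM0Matching (E m0 m : Set (V × W)) : Prop :=
  IsBipMatching E m ∧ FiniteComponents (m0 ∪ m)

/-- `I` is `m0`-matchable. -/
def M0Matchable (E m0 : Set (V × W)) (I : Set V) : Prop :=
  ∃ m, IsM0Matching E m0 m ∧ Prod.fst '' m = I

/-- `I` is `m0`-matchable onto `W'`. -/
def M0MatchableOnto (E m0 : Set (V × W)) (I : Set V) (W' : Set W) : Prop :=
  ∃ m, IsM0Matching E m0 m ∧ Prod.fst '' m = I ∧ Prod.snd '' m = W'

end Bipartite

section Star

variable {V : Type*}

/-- The edge set of the converted bimaze of the dimaze `(D, B0)`: the right class is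
`{v ∣ v ∉ B0}` (representing `(V \ B0)⋆`) and the edges are the identity matching
together with `v u⋆` for every edge `(u, v)` of `D`. -/
def starEdges (D : V → V → Prop) (B0 : Set V) : Set (V × V) :=
  {p | (p.1 = p.2 ∧ p.2 ∉ B0) ∨ (D p.2 p.1 ∧ p.2 ∉ B0)}

/-- The identity matching of the converted bimaze. -/
def starM0 (B0 : Set V) : Set (V × V) := {p | p.1 = p.2 ∧ p.1 ∉ B0}

end Star


section Aux

variable {V W : Type*}

private lemma bipStep_mono {F F' : Set (V × W)} (h : F ⊆ F') :
    ∀ a b, bipStep F a b → bipStep F' a b := by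
  rintro (v | w) (v' | w') hs <;>
    simp only [bipStep] at hs ⊢ <;> exact h hs

/-- Key lemma: if `w0` is not covered by `m`, every left vertex reachable from `w0`
in `m0 ∪ m` is covered by `m0`. -/
private lemma key_lemma (m0 m : Set (V × W))
    (hm0 : ∀ p ∈ m0, ∀ q ∈ m0, (p.1 = q.1 ∨ p.2 = q.2) → p = q)
    (hm : ∀ p ∈ m, ∀ q ∈ m, (p.1 = q.1 ∨ p.2 = q.2) → p = q)
    (w0 : W) (hw0 : w0 ∉ Prod.snd '' m) (v : V)
    (h : Relation.ReflTransGen (bipStep (m0 ∪ m)) (Sum.inr w0) (Sum.inl v)) :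
    v ∈ Prod.fst '' m0 := by
  set step0 : W → W → Prop := fun w w' => ∃ u, (u, w) ∈ m0 ∧ (u, w') ∈ m with hstep0
  set S : Set (V ⊕ W) := {x | match x with
    | Sum.inr w => Relation.ReflTransGen step0 w0 w
    | Sum.inl u => ∃ w, Relation.ReflTransGen step0 w0 w ∧ (u, w) ∈ m0} with hSdef
  have hS : ∀ x ∈ S, ∀ y, bipStep (m0 ∪ m) x y → y ∈ S := by
    rintro (u | w) hx (u' | w') hstep
    · exact hstep.elim
    · -- from inl u to inr w'
      obtain ⟨w, hw, hum0⟩ := hx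
      rcases hstep with h' | h'
      · have : (u, w') = (u, w) := hm0 (u, w') h' (u, w) hum0 (Or.inl rfl)
        have hww : w' = w := congrArg Prod.snd this
        show Relation.ReflTransGen step0 w0 w'
        rw [hww]; exact hw
      · show Relation.ReflTransGen step0 w0 w'
        exact hw.tail ⟨u, hum0, h'⟩
    · -- from inr w to inl u'
      have hx' : Relation.ReflTransGen step0 w0 w := hx
      rcases hstep with h' | h'
      · exact ⟨w, hx', h'⟩
      · rcases hx'.cases_tail with rfl | ⟨w'', hw'', hs0⟩
        · exact absurd ⟨(u', w), h', rfl⟩ hw0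
        · obtain ⟨u2, h1, h2⟩ := hs0
          have : (u', w) = (u2, w) := hm (u', w) h' (u2, w) h2 (Or.inr rfl)
          have hu : u' = u2 := congrArg Prod.fst this
          exact ⟨w'', hw'', by rw [hu]; exact h1⟩
    · exact hstep.elim
  have hreach : ∀ x, Relation.ReflTransGen (bipStep (m0 ∪ m)) (Sum.inr w0) x → x ∈ S := by
    intro x hx
    induction hx with
    | refl => exact Relation.ReflTransGen.refl
    | tail h1 h2 ih => exact hS _ ih _ h2
  obtain ⟨w, _, hvw⟩ := hreach _ h
  exact ⟨(v, w), hvw, rfl⟩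

end Aux

theorem extend_m0_matchable_onto {V W : Type*} (E m0 : Set (V × W))
    (hm0 : IsBipMatching E m0) (hsnd : Prod.snd '' m0 = Set.univ)
    (I : Set V) (hI : M0Matchable E m0 I) :
    ∃ B : Set V, I ⊆ B ∧ M0MatchableOnto E m0 B Set.univ  := by
  classical
  obtain ⟨m, ⟨⟨hmE, hmM⟩, hfin⟩, hImg⟩ := hI
  obtain ⟨hm0E, hm0M⟩ := hm0
  set Bad : Set (V ⊕ W) := {x | ∃ w0, w0 ∉ Prod.snd '' m ∧
    Relation.ReflTransGen (bipStep (m0 ∪ m)) (Sum.inr w0) x} with hBadDef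
  have hBadStep : ∀ x ∈ Bad, ∀ y, bipStep (m0 ∪ m) x y → y ∈ Bad := by
    rintro x ⟨w0, h1, h2⟩ y hs
    exact ⟨w0, h1, h2.tail hs⟩
  set m' : Set (V × W) :=
    {p | p ∈ m0 ∧ Sum.inl p.1 ∈ Bad} ∪ {p | p ∈ m ∧ Sum.inl p.1 ∉ Bad} with hm'def
  have hm'sub : m' ⊆ m0 ∪ m := by
    rintro p (⟨h, -⟩ | ⟨h, -⟩)
    · exact Or.inl h
    · exact Or.inr h
  have hstepVW : ∀ p ∈ m0 ∪ m, bipStep (m0 ∪ m) (Sum.inl p.1) (Sum.inr p.2) := by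
    intro p hp
    show (p.1, p.2) ∈ m0 ∪ m
    simpa using hp
  have hstepWV : ∀ p ∈ m0 ∪ m, bipStep (m0 ∪ m) (Sum.inr p.2) (Sum.inl p.1) := by
    intro p hp
    show (p.1, p.2) ∈ m0 ∪ m
    simpa using hp
  have hm'M : ∀ p ∈ m', ∀ q ∈ m', (p.1 = q.1 ∨ p.2 = q.2) → p = q := by
    rintro p (⟨hp, hpB⟩ | ⟨hp, hpB⟩) q (⟨hq, hqB⟩ | ⟨hq, hqB⟩) hpq
    · exact hm0M p hp q hq hpq
    · exfalso
      rcases hpq with h | h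
      · exact hqB (h ▸ hpB)
      · have h1 : Sum.inr p.2 ∈ Bad := hBadStep _ hpB _ (hstepVW p (Or.inl hp))
        have h2 : Sum.inl q.1 ∈ Bad := hBadStep _ (h ▸ h1) _ (hstepWV q (Or.inr hq))
        exact hqB h2
    · exfalso
      rcases hpq with h | h
      · exact hpB (h ▸ hqB)
      · have h1 : Sum.inr q.2 ∈ Bad := hBadStep _ hqB _ (hstepVW q (Or.inl hq))
        have h2 : Sum.inl p.1 ∈ Bad := hBadStep _ (h ▸ h1) _ (hstepWV p (Or.inr hp))
        exact hpB h2
    · exact hmM p hp q hq hpq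
  have hm'snd : Prod.snd '' m' = Set.univ := by
    apply Set.eq_univ_of_forall
    intro w
    have hw : w ∈ Prod.snd '' m0 := by rw [hsnd]; trivial
    obtain ⟨p, hp, hpw⟩ := hw
    by_cases hb : Sum.inl p.1 ∈ Bad
    · exact ⟨p, Or.inl ⟨hp, hb⟩, hpw⟩
    · subst hpw
      have hwB : Sum.inr p.2 ∉ Bad := fun hwB =>
        hb (hBadStep _ hwB _ (hstepWV p (Or.inl hp)))
      have hwm : p.2 ∈ Prod.snd '' m := by
        by_contra hc
        exact hwB ⟨p.2, hc, Relation.ReflTransGen.refl⟩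
      obtain ⟨q, hq, hqw⟩ := hwm
      have hqB : Sum.inl q.1 ∉ Bad := fun hqb =>
        hwB (by rw [← hqw]; exact hBadStep _ hqb _ (hstepVW q (Or.inr hq)))
      exact ⟨q, Or.inr ⟨hq, hqB⟩, hqw⟩
  have hIB : I ⊆ Prod.fst '' m' := by
    rw [← hImg]
    rintro v ⟨p, hp, rfl⟩
    by_cases hb : Sum.inl p.1 ∈ Bad
    · obtain ⟨w0, hw0, hreach⟩ := hb
      have hcov : p.1 ∈ Prod.fst '' m0 := key_lemma m0 m hm0M hmM w0 hw0 p.1 hreach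
      obtain ⟨q, hq, hq1⟩ := hcov
      exact ⟨q, Or.inl ⟨hq, by rw [hq1]; exact ⟨w0, hw0, hreach⟩⟩, hq1⟩
    · exact ⟨p, Or.inr ⟨hp, hb⟩, rfl⟩
  have hfin' : FiniteComponents (m0 ∪ m') := by
    intro x
    apply (hfin x).subset
    intro y hy
    exact Relation.ReflTransGen.mono
      (bipStep_mono (Set.union_subset Set.subset_union_left hm'sub)) _ _ hy
  exact ⟨Prod.fst '' m', hIB, m',
    ⟨⟨hm'sub.trans (Set.union_subset hm0E hmE), hm'M⟩, hfin'⟩, rfl, hm'snd⟩
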